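/- Let n > k ≥ 1 be integers, p ∈ (0,1) and a ∈ ℝ. On the domain D = {λ ∈ ℝ : λ < k and 1 − (λ/k)a > 0}, define g(λ) = a/(1 − (λ/k)a) + log((n − λ)p/(k − λ)). Then g is differentiable on D with g′(λ) = a²/(k(1 − (λ/k)a)²) + (n − k)/((n − λ)(k − λ)) > 0, so g is strictly increasing on D, and there exists exactly one λ ∈ D with g(λ) = 0. -/

import Mathlib

open Filter Real Set Topology

noncomputable section

/-- Existence and uniqueness of the Lagrange multiplier in the likelihood ratio method:
on `D = {λ : λ < k, 1 - (λ/k)a > 0}`, the function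
`g(λ) = a/(1 - (λ/k)a) + log((n-λ)p/(k-λ))` is differentiable with positive derivative
`g'(λ) = a²/(k(1-(λ/k)a)²) + (n-k)/((n-λ)(k-λ))`, hence strictly increasing, and it has
exactly one zero on `D`. -/
theorem stmt_3 (n k : ℕ) (hk : 1 ≤ k) (hkn : k < n) (p : ℝ) (hp : p ∈ Set.Ioo (0 : ℝ) 1)
    (a : ℝ) (D : Set ℝ) (hD : D = {l : ℝ | l < (k : ℝ) ∧ 0 < 1 - (l / (k : ℝ)) * a})
    (g : ℝ → ℝ)
    (hg : ∀ l : ℝ, g l = a / (1 - (l / (k : ℝ)) * a) +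
      Real.log (((n : ℝ) - l) * p / ((k : ℝ) - l))) :
    (∀ l ∈ D, HasDerivAt g
        (a ^ 2 / ((k : ℝ) * (1 - (l / (k : ℝ)) * a) ^ 2) +
          ((n : ℝ) - (k : ℝ)) / (((n : ℝ) - l) * ((k : ℝ) - l))) l) ∧
    (∀ l ∈ D, 0 < a ^ 2 / ((k : ℝ) * (1 - (l / (k : ℝ)) * a) ^ 2) +
        ((n : ℝ) - (k : ℝ)) / (((n : ℝ) - l) * ((k : ℝ) - l))) ∧
    StrictMonoOn g D ∧
    (∃! l : ℝ, l ∈ D ∧ g l = 0) := by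
  obtain ⟨hp0, hp1⟩ := hp
  have hK : (0:ℝ) < k := by exact_mod_cast hk
  have hKN : (k:ℝ) < n := by exact_mod_cast hkn
  have hlogp : Real.log p < 0 := Real.log_neg hp0 hp1
  -- openness of D
  have hDalt : D = Iio (k:ℝ) ∩ {l : ℝ | l • (a / (k:ℝ)) < 1} := by
    rw [hD]; ext l
    simp only [Set.mem_setOf_eq, Set.mem_inter_iff, Set.mem_Iio, smul_eq_mul]
    constructor
    · rintro ⟨h1, h2⟩
      refine ⟨h1, ?_⟩
      have : l / (k:ℝ) * a = l * (a / (k:ℝ)) := by ring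
      linarith [this ▸ h2]
    · rintro ⟨h1, h2⟩
      refine ⟨h1, ?_⟩
      have : l / (k:ℝ) * a = l * (a / (k:ℝ)) := by ring
      linarith [this ▸ h2]
  have hDopen : IsOpen D := by
    rw [hDalt]
    exact isOpen_Iio.inter (isOpen_lt (by continuity) continuous_const)
  -- convexity of D
  have hDconv : Convex ℝ D := by
    rw [hDalt]
    exact (convex_Iio _).inter (convex_halfSpace_lt (IsLinearMap.isLinearMap_smul' _) 1)
  -- the derivative
  have hderiv : ∀ l ∈ D, HasDerivAt g
      (a ^ 2 / ((k : ℝ) * (1 - (l / (k : ℝ)) * a) ^ 2) +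
        ((n : ℝ) - (k : ℝ)) / (((n : ℝ) - l) * ((k : ℝ) - l))) l := by
    intro l hl
    have hl' := hl
    rw [hD] at hl'
    obtain ⟨hlK, hu⟩ := hl'
    have hKl : 0 < (k:ℝ) - l := by linarith
    have hNl : 0 < (n:ℝ) - l := by linarith
    have hU : HasDerivAt (fun x : ℝ => 1 - x / (k:ℝ) * a) (-(1 / (k:ℝ) * a)) l := by
      simpa using (((hasDerivAt_id l).div_const (k:ℝ)).mul_const a).const_sub 1
    have h1 : HasDerivAt (fun x : ℝ => a / (1 - x / (k:ℝ) * a))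
        ((0 * (1 - l / (k:ℝ) * a) - a * (-(1 / (k:ℝ) * a))) / (1 - l / (k:ℝ) * a) ^ 2) l :=
      (hasDerivAt_const l a).div hU (ne_of_gt hu)
    have h2 : HasDerivAt (fun x : ℝ => Real.log ((n:ℝ) - x)) ((-1) / ((n:ℝ) - l)) l :=
      (((hasDerivAt_id l).const_sub (n:ℝ))).log (ne_of_gt hNl)
    have h3 : HasDerivAt (fun x : ℝ => Real.log ((k:ℝ) - x)) ((-1) / ((k:ℝ) - l)) l :=
      (((hasDerivAt_id l).const_sub (k:ℝ))).log (ne_of_gt hKl)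
    have H := h1.add (((h2.add_const (Real.log p)).sub h3))
    have heq : g =ᶠ[𝓝 l] fun x : ℝ =>
        a / (1 - x / (k:ℝ) * a) + (Real.log ((n:ℝ) - x) + Real.log p - Real.log ((k:ℝ) - x)) := by
      filter_upwards [hDopen.mem_nhds hl] with x hx
      rw [hD] at hx
      obtain ⟨hx1, hx2⟩ := hx
      have hKx : (0:ℝ) < (k:ℝ) - x := by linarith
      have hNx : (0:ℝ) < (n:ℝ) - x := by linarith
      rw [hg, Real.log_div (by positivity) (ne_of_gt hKx),
        Real.log_mul (ne_of_gt hNx) (ne_of_gt hp0)]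
    have := H.congr_of_eventuallyEq heq
    convert this using 1
    · rfl
    · rfl
    field_simp
    ring
  -- positivity of the derivative
  have hpos : ∀ l ∈ D, 0 < a ^ 2 / ((k : ℝ) * (1 - (l / (k : ℝ)) * a) ^ 2) +
      ((n : ℝ) - (k : ℝ)) / (((n : ℝ) - l) * ((k : ℝ) - l)) := by
    intro l hl
    rw [hD] at hl
    obtain ⟨hlK, hu⟩ := hl
    have hKl : 0 < (k:ℝ) - l := by linarith
    have hNl : 0 < (n:ℝ) - l := by linarith
    have h1 : 0 ≤ a ^ 2 / ((k : ℝ) * (1 - (l / (k : ℝ)) * a) ^ 2) := by positivity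
    have h2 : 0 < ((n : ℝ) - (k : ℝ)) / (((n : ℝ) - l) * ((k : ℝ) - l)) := by
      apply div_pos (by linarith) (by positivity)
    linarith
  -- continuity
  have hcont : ContinuousOn g D := fun l hl => ((hderiv l hl).continuousAt).continuousWithinAt
  -- strict monotonicity
  have hmono : StrictMonoOn g D := by
    apply strictMonoOn_of_deriv_pos hDconv hcont
    intro x hx
    rw [hDopen.interior_eq] at hx
    rw [(hderiv x hx).deriv]
    exact hpos x hx
  refine ⟨hderiv, hpos, hmono, ?_⟩
  -- existence of a point with negative value
  have hneg : ∃ l ∈ D, g l < 0 := by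
    rcases le_or_gt 0 a with ha | ha
    · -- a ≥ 0 : go to -∞, g tends to log p < 0
      have hmem : ∀ᶠ l in atBot, l ∈ D := by
        filter_upwards [eventually_lt_atBot (0:ℝ)] with l hl
        rw [hD]
        refine ⟨lt_trans hl hK, ?_⟩
        have h0 : l / (k:ℝ) < 0 := div_neg_of_neg_of_pos hl hK
        have := mul_nonpos_of_nonpos_of_nonneg h0.le ha
        linarith
      have hKsub : Tendsto (fun l : ℝ => (k:ℝ) - l) atBot atTop := by
        have := tendsto_atTop_add_const_left atBot (k:ℝ)
          (tendsto_neg_atBot_atTop : Tendsto (fun l : ℝ => -l) atBot atTop)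
        exact this.congr (fun l => by ring)
      have t2inner : Tendsto (fun l : ℝ => ((n:ℝ) - l) * p / ((k:ℝ) - l)) atBot (𝓝 p) := by
        have h1 : Tendsto (fun l : ℝ => (1 + ((n:ℝ) - (k:ℝ)) / ((k:ℝ) - l)) * p) atBot
            (𝓝 ((1 + 0) * p)) :=
          ((tendsto_const_nhds.add (tendsto_const_nhds.div_atTop hKsub)).mul tendsto_const_nhds)
        rw [show (1 + (0:ℝ)) * p = p by ring] at h1
        apply h1.congr'
        filter_upwards [eventually_lt_atBot ((k:ℝ))] with l hl
        have h0 : (k:ℝ) - l ≠ 0 := sub_ne_zero.mpr (ne_of_gt hl)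
        field_simp
        ring
      have t2 : Tendsto (fun l : ℝ => Real.log (((n:ℝ) - l) * p / ((k:ℝ) - l))) atBot
          (𝓝 (Real.log p)) :=
        (Real.continuousAt_log (ne_of_gt hp0)).tendsto.comp t2inner
      have t1 : Tendsto (fun l : ℝ => a / (1 - l / (k:ℝ) * a)) atBot (𝓝 0) := by
        rcases eq_or_lt_of_le ha with h | h
        · simp only [← h, zero_div]
          exact tendsto_const_nhds
        · apply tendsto_const_nhds.div_atTop
          have := tendsto_atTop_add_const_left atBot (1:ℝ)
            ((tendsto_neg_atBot_atTop : Tendsto (fun l : ℝ => -l) atBot atTop).atTop_mul_const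
              (div_pos h hK))
          exact this.congr (fun l => by ring)
      have hgten : Tendsto g atBot (𝓝 (0 + Real.log p)) :=
        (t1.add t2).congr (fun l => (hg l).symm)
      have hev : ∀ᶠ l in atBot, g l < 0 := hgten.eventually_lt_const (by linarith)
      obtain ⟨l, hlD, hl⟩ := (hmem.and hev).exists
      exact ⟨l, hlD, hl⟩
    · -- a < 0 : go to (k/a)⁺, g tends to -∞
      set c : ℝ := (k:ℝ) / a with hc
      have hcneg : c < 0 := div_neg_of_pos_of_neg hK ha
      have hmemD : ∀ l ∈ Ioo c (k:ℝ), l ∈ D := by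
        intro l hl
        rw [hD]
        refine ⟨hl.2, ?_⟩
        have h1 : l * a < (k:ℝ) := (div_lt_iff_of_neg ha).mp hl.1
        have h2 : l / (k:ℝ) * a = l * a / (k:ℝ) := by ring
        rw [h2]
        have := (div_lt_one hK).mpr h1
        linarith
      have hmem : ∀ᶠ l in 𝓝[>] c, l ∈ D := by
        filter_upwards [Ioo_mem_nhdsGT_of_mem ⟨le_refl c, lt_trans hcneg hK⟩] with l hl
        exact hmemD l hl
      have hu0 : Tendsto (fun l : ℝ => 1 - l / (k:ℝ) * a) (𝓝[>] c) (𝓝[>] 0) := by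
        rw [tendsto_nhdsWithin_iff]
        constructor
        · have hcval : 1 - c / (k:ℝ) * a = 0 := by
            have h1 : c / (k:ℝ) * a = 1 := by
              rw [hc]; field_simp [ne_of_gt hK, ne_of_lt ha]
            rw [h1]; ring
          have : ContinuousAt (fun l : ℝ => 1 - l / (k:ℝ) * a) c := by fun_prop
          rw [ContinuousAt, hcval] at this
          exact this.mono_left nhdsWithin_le_nhds
        · filter_upwards [Ioo_mem_nhdsGT_of_mem ⟨le_refl c, lt_trans hcneg hK⟩] with l hl
          have := hmemD l hl
          rw [hD] at this
          exact this.2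
      have t1 : Tendsto (fun l : ℝ => a / (1 - l / (k:ℝ) * a)) (𝓝[>] c) atBot := by
        have hinv : Tendsto (fun l : ℝ => (1 - l / (k:ℝ) * a)⁻¹) (𝓝[>] c) atTop :=
          tendsto_inv_nhdsGT_zero.comp hu0
        have := (tendsto_const_mul_atBot_of_neg ha).mpr hinv
        exact this.congr (fun l => (div_eq_mul_inv _ _).symm)
      have hKc : 0 < (k:ℝ) - c := by linarith
      have hNc : 0 < (n:ℝ) - c := by linarith
      have t2 : Tendsto (fun l : ℝ => Real.log (((n:ℝ) - l) * p / ((k:ℝ) - l))) (𝓝[>] c)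
          (𝓝 (Real.log (((n:ℝ) - c) * p / ((k:ℝ) - c)))) := by
        have harg : ContinuousAt (fun l : ℝ => ((n:ℝ) - l) * p / ((k:ℝ) - l)) c :=
          ContinuousAt.div (by fun_prop) (by fun_prop) (ne_of_gt hKc)
        have := harg.log (by positivity)
        exact this.tendsto.mono_left nhdsWithin_le_nhds
      have hgten : Tendsto g (𝓝[>] c) atBot :=
        (t1.atBot_add t2).congr (fun l => (hg l).symm)
      have hev : ∀ᶠ l in 𝓝[>] c, g l < 0 := hgten.eventually (eventually_lt_atBot 0)
      obtain ⟨l, hlD, hl⟩ := (hmem.and hev).exists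
      exact ⟨l, hlD, hl⟩
  -- existence of a point with positive value
  have hposval : ∃ l ∈ D, 0 < g l := by
    rcases lt_or_ge a 1 with ha | ha
    · -- a < 1 : go to k⁻, the log term tends to +∞
      have hmem : ∀ᶠ l in 𝓝[<] (k:ℝ), l ∈ D := by
        have hval : (0:ℝ) < 1 - (k:ℝ) / (k:ℝ) * a := by
          rw [div_self (ne_of_gt hK)]; linarith
        have hcontu : ContinuousAt (fun l : ℝ => 1 - l / (k:ℝ) * a) (k:ℝ) := by fun_prop
        have hev : ∀ᶠ l in 𝓝 (k:ℝ), 0 < 1 - l / (k:ℝ) * a :=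
          hcontu.tendsto.eventually (eventually_gt_nhds hval)
        filter_upwards [self_mem_nhdsWithin, hev.filter_mono nhdsWithin_le_nhds] with l h1 h2
        rw [hD]; exact ⟨h1, h2⟩
      have t1 : Tendsto (fun l : ℝ => a / (1 - l / (k:ℝ) * a)) (𝓝[<] (k:ℝ))
          (𝓝 (a / (1 - (k:ℝ) / (k:ℝ) * a))) := by
        have hden : (1 - (k:ℝ) / (k:ℝ) * a) ≠ 0 := by
          rw [div_self (ne_of_gt hK)]; intro h; nlinarith
        have : ContinuousAt (fun l : ℝ => a / (1 - l / (k:ℝ) * a)) (k:ℝ) :=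
          ContinuousAt.div (by fun_prop) (by fun_prop) hden
        exact this.tendsto.mono_left nhdsWithin_le_nhds
      have hKsub : Tendsto (fun l : ℝ => (k:ℝ) - l) (𝓝[<] (k:ℝ)) (𝓝[>] 0) := by
        rw [tendsto_nhdsWithin_iff]
        constructor
        · have : ContinuousAt (fun l : ℝ => (k:ℝ) - l) (k:ℝ) := by fun_prop
          rw [ContinuousAt, sub_self] at this
          exact this.mono_left nhdsWithin_le_nhds
        · filter_upwards [self_mem_nhdsWithin] with l hl
          exact sub_pos.mpr (mem_Iio.mp hl)
      have t2inner : Tendsto (fun l : ℝ => ((n:ℝ) - l) * p / ((k:ℝ) - l)) (𝓝[<] (k:ℝ))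
          atTop := by
        have hnum : Tendsto (fun l : ℝ => ((n:ℝ) - l) * p) (𝓝[<] (k:ℝ))
            (𝓝 (((n:ℝ) - (k:ℝ)) * p)) := by
          have : ContinuousAt (fun l : ℝ => ((n:ℝ) - l) * p) (k:ℝ) := by fun_prop
          exact this.tendsto.mono_left nhdsWithin_le_nhds
        have hinv : Tendsto (fun l : ℝ => ((k:ℝ) - l)⁻¹) (𝓝[<] (k:ℝ)) atTop :=
          tendsto_inv_nhdsGT_zero.comp hKsub
        have := hnum.pos_mul_atTop (by nlinarith) hinv
        exact this.congr (fun l => (div_eq_mul_inv _ _).symm)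
      have t2 : Tendsto (fun l : ℝ => Real.log (((n:ℝ) - l) * p / ((k:ℝ) - l))) (𝓝[<] (k:ℝ))
          atTop := Real.tendsto_log_atTop.comp t2inner
      have hgten : Tendsto g (𝓝[<] (k:ℝ)) atTop :=
        (t1.add_atTop t2).congr (fun l => (hg l).symm)
      have hev : ∀ᶠ l in 𝓝[<] (k:ℝ), 0 < g l := hgten.eventually (eventually_gt_atTop 0)
      obtain ⟨l, hlD, hl⟩ := (hmem.and hev).exists
      exact ⟨l, hlD, hl⟩
    · -- 1 ≤ a : go to (k/a)⁻, the first term tends to +∞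
      have ha0 : 0 < a := by linarith
      set c : ℝ := (k:ℝ) / a with hc
      have hc0 : 0 < c := div_pos hK ha0
      have hcK : c ≤ (k:ℝ) := div_le_self hK.le ha
      have hS : Ioo (c / 2) c ∈ 𝓝[<] c :=
        Ioo_mem_nhdsLT_of_mem ⟨half_lt_self hc0, le_refl c⟩
      have hmemD : ∀ l ∈ Ioo (c / 2) c, l ∈ D ∧ 0 < 1 - l / (k:ℝ) * a := by
        intro l hl
        have h1 : l * a < (k:ℝ) := by
          have h2 : l < (k:ℝ) / a := hc ▸ hl.2
          exact (lt_div_iff₀ ha0).mp h2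
        have h2 : 0 < 1 - l / (k:ℝ) * a := by
          have h3 : l / (k:ℝ) * a = l * a / (k:ℝ) := by ring
          rw [h3]
          have := (div_lt_one hK).mpr h1
          linarith
        refine ⟨?_, h2⟩
        rw [hD]
        exact ⟨lt_of_lt_of_le hl.2 hcK, h2⟩
      have hu0 : Tendsto (fun l : ℝ => 1 - l / (k:ℝ) * a) (𝓝[<] c) (𝓝[>] 0) := by
        rw [tendsto_nhdsWithin_iff]
        constructor
        · have hcval : 1 - c / (k:ℝ) * a = 0 := by
            have h1 : c / (k:ℝ) * a = 1 := by
              rw [hc]; field_simp [ne_of_gt hK, ne_of_gt ha0]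
            rw [h1]; ring
          have : ContinuousAt (fun l : ℝ => 1 - l / (k:ℝ) * a) c := by fun_prop
          rw [ContinuousAt, hcval] at this
          exact this.mono_left nhdsWithin_le_nhds
        · filter_upwards [hS] with l hl
          exact (hmemD l hl).2
      have t1 : Tendsto (fun l : ℝ => a / (1 - l / (k:ℝ) * a)) (𝓝[<] c) atTop := by
        have hinv : Tendsto (fun l : ℝ => (1 - l / (k:ℝ) * a)⁻¹) (𝓝[<] c) atTop :=
          tendsto_inv_nhdsGT_zero.comp hu0
        exact (hinv.const_mul_atTop ha0).congr (fun l => (div_eq_mul_inv _ _).symm)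
      -- lower bound for the log term near c
      have hbound : ∀ᶠ l in 𝓝[<] c,
          Real.log (((n:ℝ) - c) * p / ((k:ℝ) - c / 2)) ≤
            Real.log (((n:ℝ) - l) * p / ((k:ℝ) - l)) := by
        filter_upwards [hS] with l hl
        have hNc : 0 < (n:ℝ) - c := by linarith
        have hKl : 0 < (k:ℝ) - l := by
          have := lt_of_lt_of_le hl.2 hcK; linarith
        have hKc2 : 0 < (k:ℝ) - c / 2 := by linarith
        have harg : ((n:ℝ) - c) * p / ((k:ℝ) - c / 2) ≤ ((n:ℝ) - l) * p / ((k:ℝ) - l) := by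
          apply div_le_div₀ (by nlinarith) (by nlinarith [mul_le_mul_of_nonneg_right hl.2.le hp0.le]) hKl (by linarith [hl.1])
        exact Real.log_le_log (by positivity) harg
      have hgten : Tendsto g (𝓝[<] c) atTop := by
        have := tendsto_atTop_add_right_of_le' (𝓝[<] c) _ t1 hbound
        exact this.congr (fun l => (hg l).symm)
      have hev : ∀ᶠ l in 𝓝[<] c, 0 < g l := hgten.eventually (eventually_gt_atTop 0)
      have hmem : ∀ᶠ l in 𝓝[<] c, l ∈ D := by
        filter_upwards [hS] with l hl
        exact (hmemD l hl).1
      obtain ⟨l, hlD, hl⟩ := (hmem.and hev).exists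
      exact ⟨l, hlD, hl⟩
  obtain ⟨l₁, hl₁D, hl₁⟩ := hneg
  obtain ⟨l₂, hl₂D, hl₂⟩ := hposval
  have hl12 : l₁ ≤ l₂ := by
    by_contra h
    push_neg at h
    have := hmono hl₂D hl₁D h
    linarith
  have hIcc : Icc l₁ l₂ ⊆ D := hDconv.ordConnected.out hl₁D hl₂D
  have := intermediate_value_Icc hl12 (hcont.mono hIcc)
  obtain ⟨c, hc, hgc⟩ := this ⟨le_of_lt hl₁, le_of_lt hl₂⟩
  refine ⟨c, ⟨hIcc hc, hgc⟩, ?_⟩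
  rintro y ⟨hyD, hy⟩
  rcases lt_trichotomy y c with h | h | h
  · have := hmono hyD (hIcc hc) h; rw [hy, hgc] at this; linarith
  · exact h
  · have := hmono (hIcc hc) hyD h; rw [hy, hgc] at this; linarith
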